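/- Let w ∈ ℝⁿ have strictly positive entries, let S ⊆ ℝⁿ be any set, and let x* ∈ S satisfy OWA_w(x*) ≥ OWA_w(y) for all y ∈ S. Then x* is Pareto efficient in S: there is no y ∈ S with x*_k ≤ y_k for all k and y ≠ x*. In particular, every maximizer of an OWA objective with positive weights over a feasible set is a Pareto efficient solution of the underlying multiobjective problem. -/
import Mathlib


/-- The vector `y` sorted in nondecreasing order. -/
noncomputable def sortVec {n : ℕ} (y : Fin n → ℝ) : Fin n → ℝ :=
  y ∘ Tuple.sort y

/-- The ordered weighted average of `y` with weights `w`. -/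
noncomputable def OWA {n : ℕ} (w y : Fin n → ℝ) : ℝ :=
  ∑ k, w k * sortVec y k

lemma sum_sortVec {n : ℕ} (y : Fin n → ℝ) : ∑ k, sortVec y k = ∑ k, y k :=
  Equiv.sum_comp (Tuple.sort y) y

lemma sortVec_mono {n : ℕ} {x y : Fin n → ℝ} (h : ∀ k, x k ≤ y k) (k : Fin n) :
    sortVec x k ≤ sortVec y k := by
  classical
  set σ := Tuple.sort x
  set τ := Tuple.sort y
  -- B : indices of the k+1 smallest values of y
  set B : Finset (Fin n) := Finset.image τ (Finset.Iic k) with hB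
  have hBcard : B.card = (k : ℕ) + 1 := by
    rw [hB, Finset.card_image_of_injective _ τ.injective, Fin.card_Iic]
  set B' : Finset (Fin n) := Finset.image σ.symm B with hB'
  have hB'card : B'.card = (k : ℕ) + 1 := by
    rw [hB', Finset.card_image_of_injective _ σ.symm.injective, hBcard]
  have : ∃ i ∈ B', k ≤ i := by
    by_contra hc
    push_neg at hc
    have hsub : B' ⊆ Finset.Iio k := fun i hi => Finset.mem_Iio.2 (hc i hi)
    have := Finset.card_le_card hsub
    rw [hB'card, Fin.card_Iio] at this
    omega
  obtain ⟨i, hi, hki⟩ := this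
  obtain ⟨b, hb, rfl⟩ := Finset.mem_image.1 hi
  obtain ⟨j, hj, rfl⟩ := Finset.mem_image.1 hb
  have h1 : sortVec x k ≤ x (σ (σ.symm (τ j))) := Tuple.monotone_sort x hki
  rw [Equiv.apply_symm_apply] at h1
  calc sortVec x k ≤ x (τ j) := h1
    _ ≤ y (τ j) := h (τ j)
    _ ≤ sortVec y k := Tuple.monotone_sort y (Finset.mem_Iic.1 hj)

/-- Every maximizer of an OWA objective with positive weights over a feasible set `S`
is Pareto efficient in `S`: no point of `S` componentwise dominates it. -/
theorem owa_maximizer_pareto_efficient {n : ℕ} (w : Fin n → ℝ) (hw_pos : ∀ k, 0 < w k)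
    (S : Set (Fin n → ℝ)) (xstar : Fin n → ℝ) (hmem : xstar ∈ S)
    (hopt : ∀ y ∈ S, OWA w y ≤ OWA w xstar) :
    ¬ ∃ y ∈ S, (∀ k, xstar k ≤ y k) ∧ y ≠ xstar := by
  rintro ⟨y, hyS, hle, hne⟩
  have hmono := sortVec_mono hle
  -- strict sum inequality
  have hsumlt : ∑ k, xstar k < ∑ k, y k := by
    obtain ⟨k0, hk0⟩ : ∃ k, xstar k ≠ y k := by
      by_contra hc; push_neg at hc; exact hne (funext fun k => (hc k).symm)
    exact Finset.sum_lt_sum (fun k _ => hle k)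
      ⟨k0, Finset.mem_univ k0, lt_of_le_of_ne (hle k0) hk0⟩
  have hsort : ∑ k, sortVec xstar k < ∑ k, sortVec y k := by
    rw [sum_sortVec, sum_sortVec]; exact hsumlt
  obtain ⟨k1, -, hk1⟩ : ∃ k ∈ Finset.univ, sortVec xstar k < sortVec y k := by
    by_contra hc; push_neg at hc
    exact absurd (Finset.sum_le_sum hc) (not_le.2 hsort)
  have : OWA w xstar < OWA w y :=
    Finset.sum_lt_sum (fun k _ => mul_le_mul_of_nonneg_left (hmono k) (hw_pos k).le)
      ⟨k1, Finset.mem_univ k1, mul_lt_mul_of_pos_left hk1 (hw_pos k1)⟩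
  exact absurd (hopt y hyS) (not_le.2 this)
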